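/- Let S be a finite-dimensional algebra over a field F, let e be a nonzero idempotent of S, and let T be a finite-dimensional S-module such that the natural restriction map End_S(T) → End_{eSe}(eT) is an isomorphism. If T is a double centraliser module for S, then eT is a double centraliser module for eSe. -/

import Mathlib

/-- The double centraliser property: every additive endomorphism of `P` commuting with all
`R`-linear endomorphisms of `P` is given by the action of an element of `R` (i.e. the natural
map `R → DEnd_R(P)` is surjective). -/
def HasDCP (R : Type*) [Ring R] (P : Type*) [AddCommGroup P] [Module R P] : Prop :=
  ∀ σ : P →+ P, (∀ (α : P →ₗ[R] P) (p : P), σ (α p) = α (σ p)) → ∃ r : R, ∀ p : P, σ p = r • p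

section Corner

variable {S : Type*} [Ring S]

/-- The corner subring `eSe` of a ring `S` at an (idempotent) element `e`, realised as the
non-unital subring `{x | e * x = x ∧ x * e = x}`. -/
def corner (e : S) : NonUnitalSubring S where
  carrier := {x | e * x = x ∧ x * e = x}
  zero_mem' := by simp
  add_mem' {a b} ha hb := ⟨by rw [mul_add, ha.1, hb.1], by rw [add_mul, ha.2, hb.2]⟩
  neg_mem' {a} ha := ⟨by rw [mul_neg, ha.1], by rw [neg_mul, ha.2]⟩
  mul_mem' {a b} ha hb := ⟨by rw [← mul_assoc, ha.1], by rw [mul_assoc, hb.2]⟩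

instance cornerOne (e : S) [hf : Fact (IsIdempotentElem e)] : One (corner e) :=
  ⟨⟨e, hf.out, hf.out⟩⟩

/-- For an idempotent `e`, the corner `eSe` is a ring with identity `e`. -/
instance cornerRing (e : S) [Fact (IsIdempotentElem e)] : Ring (corner e) :=
  { (inferInstance : NonUnitalRing (corner e)), cornerOne e with
    one_mul := fun a => Subtype.ext a.2.1
    mul_one := fun a => Subtype.ext a.2.2 }

variable (e : S) (T : Type*) [AddCommGroup T] [Module S T] [Fact (IsIdempotentElem e)]

/-- The corner module `eT = {t | e • t = t}` of an `S`-module `T`. -/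
def cornerMod : AddSubgroup T where
  carrier := {t | e • t = t}
  zero_mem' := by simp
  add_mem' {a b} ha hb := by simp only [Set.mem_setOf_eq, smul_add] at *; rw [ha, hb]
  neg_mem' {a} ha := by simp only [Set.mem_setOf_eq, smul_neg] at *; rw [ha]

/-- The module structure of `eT` over the corner ring `eSe`. -/
instance cornerModule : Module (corner e) ↥(cornerMod e T) where
  smul x t := ⟨x.1 • t.1, by
    show e • (x.1 • t.1) = x.1 • t.1
    rw [← mul_smul, x.2.1]⟩
  one_smul t := Subtype.ext (t.2 : e • t.1 = t.1)
  mul_smul x y t := Subtype.ext (mul_smul x.1 y.1 t.1)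
  smul_zero x := Subtype.ext (smul_zero x.1)
  smul_add x s t := Subtype.ext (smul_add x.1 s.1 t.1)
  add_smul x y t := Subtype.ext (add_smul x.1 y.1 t.1)
  zero_smul t := Subtype.ext (zero_smul S t.1)

/-- The natural restriction map `End_S(T) → End_{eSe}(eT)`, `g ↦ g|_{eT}`. -/
def restrictEnd (g : T →ₗ[S] T) : ↥(cornerMod e T) →ₗ[corner e] ↥(cornerMod e T) where
  toFun t := ⟨g t.1, by
    show e • g t.1 = g t.1
    rw [← map_smul, (t.2 : e • t.1 = t.1)]⟩
  map_add' s t := Subtype.ext (map_add g s.1 t.1)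
  map_smul' x t := Subtype.ext (map_smul g x.1 t.1)

end Corner

/-- **Proposition 5.2.** Let `S` be a finite-dimensional algebra over a field `F`, let `e` be a
nonzero idempotent of `S`, and let `T` be a finite-dimensional `S`-module such that the natural
restriction map `End_S(T) → End_{eSe}(eT)` is an isomorphism.  If `T` is a double centraliser
module for `S`, then `eT` is a double centraliser module for `eSe`. -/
theorem corner_hasDCP
    (F : Type*) [Field F] (S : Type*) [Ring S] [Algebra F S] [FiniteDimensional F S]
    (T : Type*) [AddCommGroup T] [Module S T] [Module F T] [IsScalarTower F S T]
    [FiniteDimensional F T]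
    (e : S) [Fact (IsIdempotentElem e)] (he0 : e ≠ 0)
    (hbij : Function.Bijective (fun g : T →ₗ[S] T => restrictEnd e T g))
    (hdcp : HasDCP S T) :
    HasDCP (corner e) ↥(cornerMod e T) := by
  intro σ hσ
  have hee : e * e = e := (Fact.out : IsIdempotentElem e)
  have hmem : ∀ t : T, e • t ∈ cornerMod e T := fun t => by
    show e • e • t = e • t
    rw [← mul_smul, hee]
  -- extend σ to an additive endomorphism of T
  set τ : T →+ T :=
    { toFun := fun t => (σ ⟨e • t, hmem t⟩ : cornerMod e T).1
      map_zero' := by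
        have : (⟨e • (0 : T), hmem 0⟩ : cornerMod e T) = 0 := Subtype.ext (smul_zero e)
        show ((σ ⟨e • (0 : T), hmem 0⟩ : cornerMod e T) : T) = 0
        rw [this, map_zero]; rfl
      map_add' := fun s t => by
        have : (⟨e • (s + t), hmem _⟩ : cornerMod e T)
            = ⟨e • s, hmem s⟩ + ⟨e • t, hmem t⟩ := Subtype.ext (smul_add e s t)
        show ((σ ⟨e • (s + t), hmem _⟩ : cornerMod e T) : T) = _
        rw [this, map_add]; rfl } with hτ
  have hcomm : ∀ (α : T →ₗ[S] T) (t : T), τ (α t) = α (τ t) := by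
    intro α t
    have h1 : (⟨e • α t, hmem _⟩ : cornerMod e T) = restrictEnd e T α ⟨e • t, hmem t⟩ :=
      Subtype.ext (map_smul α e t).symm
    have h2 := hσ (restrictEnd e T α) ⟨e • t, hmem t⟩
    show (σ ⟨e • α t, hmem _⟩ : cornerMod e T).1 = α (σ ⟨e • t, hmem t⟩ : cornerMod e T).1
    rw [h1, h2]
    rfl
  obtain ⟨s, hs⟩ := hdcp τ hcomm
  refine ⟨⟨e * s * e, by rw [← mul_assoc, ← mul_assoc, hee], by rw [mul_assoc, mul_assoc, hee, ← mul_assoc]⟩, fun p => ?_⟩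
  apply Subtype.ext
  show (σ p : cornerMod e T).1 = (e * s * e) • p.1
  have hp : e • p.1 = p.1 := p.2
  have hmemσ : e • (σ p : cornerMod e T).1 = (σ p : cornerMod e T).1 := (σ p).2
  have : τ p.1 = (σ p : cornerMod e T).1 := by
    show (σ ⟨e • p.1, hmem _⟩ : cornerMod e T).1 = _
    congr 2
    exact Subtype.ext hp
  rw [← this, hs p.1, mul_smul, mul_smul, hp, ← hs p.1, this, hmemσ]
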